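/- Let K be a cone in a real vector space (i.e. K is closed under addition and under multiplication by nonnegative scalars, and K ∩ (−K) = {0}) that is generated as a wedge by two minimal sets A and B, so K = we(A) = we(B) with A and B each minimal. Then for every x ∈ A there exists α > 0 with αx ∈ B, and for every y ∈ B there exists β > 0 with βy ∈ A. -/

import Mathlib

open BigOperators

/-- `x` has a unique convex combination in terms of `v 1, …, v m`. -/
def UniqueConvComb {V : Type*} [AddCommGroup V] [Module ℝ V] {m : ℕ}
    (v : Fin m → V) (x : V) : Prop :=
  ∀ lam mu : Fin m → ℝ, (∀ i, 0 ≤ lam i) → (∀ i, 0 ≤ mu i) →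
    ∑ i, lam i = 1 → ∑ i, mu i = 1 →
    x = ∑ i, lam i • v i → x = ∑ i, mu i • v i → lam = mu

/-- The open convex hull generated by `v 1, …, v m`: all combinations with all
coefficients strictly positive. -/
def openHull {V : Type*} [AddCommGroup V] [Module ℝ V] {m : ℕ} (v : Fin m → V) : Set V :=
  {x | ∃ lam : Fin m → ℝ, (∀ i, 0 < lam i) ∧ ∑ i, lam i = 1 ∧ x = ∑ i, lam i • v i}

/-- `x` is an extreme point of the convex set `C`: it is not a nontrivial convex
combination of two distinct points of `C`. -/
def IsExtremePt {V : Type*} [AddCommGroup V] [Module ℝ V] (C : Set V) (x : V) : Prop :=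
  ¬ ∃ y ∈ C, ∃ z ∈ C, y ≠ z ∧ ∃ α : ℝ, 0 < α ∧ α < 1 ∧ x = α • y + (1 - α) • z

/-- The wedge generated by `A`: all finite nonnegative linear combinations of elements
of `A`. -/
def wedge {V : Type*} [AddCommGroup V] [Module ℝ V] (A : Set V) : Set V :=
  {x | ∃ (n : ℕ) (α : Fin n → ℝ) (y : Fin n → V),
    (∀ i, 0 ≤ α i) ∧ (∀ i, y i ∈ A) ∧ x = ∑ i, α i • y i}

/-- `x ∈ we(A)` has a unique decomposition in terms of `A`. -/
def UniqueWedgeDecomp {V : Type*} [AddCommGroup V] [Module ℝ V] (A : Set V) (x : V) : Prop :=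
  ∀ (n : ℕ) (y : Fin n → V), Function.Injective y → (∀ i, y i ∈ A) →
    ∀ α β : Fin n → ℝ, (∀ i, 0 ≤ α i) → (∀ i, 0 ≤ β i) →
      x = ∑ i, α i • y i → x = ∑ i, β i • y i → α = β

section AuxWedge

variable {V : Type*} [AddCommGroup V] [Module ℝ V]

lemma zero_mem_wedge (A : Set V) : (0 : V) ∈ wedge A :=
  ⟨0, fun i => i.elim0, fun i => i.elim0, fun i => i.elim0, fun i => i.elim0, by simp⟩

lemma mem_wedge (A : Set V) {x : V} (hx : x ∈ A) : x ∈ wedge A :=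
  ⟨1, fun _ => 1, fun _ => x, fun _ => zero_le_one, fun _ => hx, by simp⟩

lemma smul_mem_wedge (A : Set V) {c : ℝ} (hc : 0 ≤ c) {x : V} (hx : x ∈ wedge A) :
    c • x ∈ wedge A := by
  obtain ⟨n, α, y, hα, hy, rfl⟩ := hx
  refine ⟨n, fun i => c * α i, y, fun i => mul_nonneg hc (hα i), hy, ?_⟩
  rw [Finset.smul_sum]
  exact Finset.sum_congr rfl fun i _ => (mul_smul c (α i) (y i)).symm

lemma add_mem_wedge (A : Set V) {x z : V} (hx : x ∈ wedge A) (hz : z ∈ wedge A) :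
    x + z ∈ wedge A := by
  obtain ⟨n, α, y, hα, hy, rfl⟩ := hx
  obtain ⟨m, β, w, hβ, hw, rfl⟩ := hz
  refine ⟨n + m, Fin.append α β, Fin.append y w, ?_, ?_, ?_⟩
  · intro i
    refine Fin.addCases (fun j => ?_) (fun j => ?_) i
    · simpa [Fin.append_left] using hα j
    · simpa [Fin.append_right] using hβ j
  · intro i
    refine Fin.addCases (fun j => ?_) (fun j => ?_) i
    · simpa [Fin.append_left] using hy j
    · simpa [Fin.append_right] using hw j
  · rw [Fin.sum_univ_add]
    simp [Fin.append_left, Fin.append_right]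

lemma sum_mem_wedge (A : Set V) {ι : Type*} (s : Finset ι) (f : ι → V)
    (hf : ∀ i ∈ s, f i ∈ wedge A) : ∑ i ∈ s, f i ∈ wedge A := by
  classical
  induction s using Finset.induction with
  | empty => simpa using zero_mem_wedge A
  | insert _ _ h ih =>
      rw [Finset.sum_insert h]
      exact add_mem_wedge A (hf _ (Finset.mem_insert_self _ _))
        (ih fun i hi => hf i (Finset.mem_insert_of_mem hi))

lemma wedge_mono {A B : Set V} (h : A ⊆ B) : wedge A ⊆ wedge B := by
  rintro z ⟨n, α, y, hα, hy, rfl⟩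
  exact ⟨n, α, y, hα, fun i => h (hy i), rfl⟩

lemma wedge_decomp (A : Set V) (x : V) {z : V} (hz : z ∈ wedge A) :
    ∃ t : ℝ, 0 ≤ t ∧ ∃ r ∈ wedge (A \ {x}), z = t • x + r := by
  classical
  obtain ⟨n, α, y, hα, hy, rfl⟩ := hz
  refine ⟨∑ i ∈ Finset.univ.filter (fun i => y i = x), α i,
    Finset.sum_nonneg fun i _ => hα i,
    ∑ i ∈ Finset.univ.filter (fun i => ¬ y i = x), α i • y i, ?_, ?_⟩
  · refine sum_mem_wedge _ _ _ fun i hi => smul_mem_wedge _ (hα i) (mem_wedge _ ?_)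
    have := Finset.mem_filter.mp hi
    exact ⟨hy i, this.2⟩
  · rw [← Finset.sum_filter_add_sum_filter_not Finset.univ (fun i => y i = x)
      (fun i => α i • y i)]
    congr 1
    rw [Finset.sum_smul]
    refine Finset.sum_congr rfl fun i hi => ?_
    rw [(Finset.mem_filter.mp hi).2]

lemma not_self_mem_wedge_diff (A : Set V) {x : V} (hxA : x ∈ A)
    (hmin : wedge (A \ {x}) ≠ wedge A) : x ∉ wedge (A \ {x}) := by
  intro hx
  apply hmin
  refine Set.Subset.antisymm (wedge_mono Set.diff_subset) ?_
  rintro z ⟨n, α, y, hα, hy, rfl⟩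
  refine sum_mem_wedge _ _ _ fun i _ => smul_mem_wedge _ (hα i) ?_
  by_cases h : y i = x
  · exact h ▸ hx
  · exact mem_wedge _ ⟨hy i, h⟩

lemma key_half (A B : Set V)
    (hAB : wedge A = wedge B)
    (hcone : wedge A ∩ -(wedge A) = {0})
    (hminA : ∀ x ∈ A, wedge (A \ {x}) ≠ wedge A) :
    ∀ x ∈ A, ∃ α : ℝ, 0 < α ∧ α • x ∈ B := by
  intro x hxA
  have hxnot : x ∉ wedge (A \ {x}) := not_self_mem_wedge_diff A hxA (hminA x hxA)
  have hx0 : x ≠ 0 := fun h => hxnot (h ▸ zero_mem_wedge _)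
  have hdiff : wedge (A \ {x}) ⊆ wedge A := wedge_mono Set.diff_subset
  have hxB : x ∈ wedge B := hAB ▸ mem_wedge A hxA
  obtain ⟨n, β, y, hβ, hyB, hxsum⟩ := hxB
  have hyA : ∀ i, y i ∈ wedge A := fun i => hAB.symm ▸ mem_wedge B (hyB i)
  choose t ht r hr hyeq using fun i => wedge_decomp A x (hyA i)
  set c : ℝ := ∑ i, β i * t i with hc
  set R : V := ∑ i, β i • r i with hRdef
  have hR : R ∈ wedge (A \ {x}) :=
    sum_mem_wedge _ _ _ fun i _ => smul_mem_wedge _ (hβ i) (hr i)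
  have hxc : x = c • x + R := by
    calc x = ∑ i, β i • (t i • x + r i) := by
          conv_lhs => rw [hxsum]
          exact Finset.sum_congr rfl fun i _ => by rw [hyeq i]
    _ = c • x + R := by
          rw [hc, hRdef, Finset.sum_smul, ← Finset.sum_add_distrib]
          exact Finset.sum_congr rfl fun i _ => by rw [smul_add, mul_smul]
  have hxR : (1 - c) • x = R := by
    rw [sub_smul, one_smul, sub_eq_iff_eq_add']
    exact hxc
  have h1c : ¬ c < 1 := by
    intro h
    apply hxnot
    have hcnz : (1 - c) ≠ 0 := by linarith
    have hxeq : x = (1 - c)⁻¹ • R := by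
      rw [← hxR, smul_smul, inv_mul_cancel₀ hcnz, one_smul]
    have hm : (1 - c)⁻¹ • R ∈ wedge (A \ {x}) :=
      smul_mem_wedge _ (inv_nonneg.mpr (show (0:ℝ) ≤ 1 - c by linarith)) hR
    exact hxeq.symm ▸ hm
  have hxR0 : (1 - c) • x = 0 := by
    have h1 : (1 - c) • x ∈ wedge A := hxR ▸ hdiff hR
    have h2 : (1 - c) • x ∈ -(wedge A) := by
      rw [Set.mem_neg, ← neg_smul, neg_sub]
      exact smul_mem_wedge _ (by linarith [not_lt.mp h1c]) (mem_wedge A hxA)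
    have := hcone ▸ Set.mem_inter h1 h2
    simpa using this
  have hc1 : c = 1 := by
    rcases smul_eq_zero.mp hxR0 with h | h
    · linarith [sub_eq_zero.mp h]
    · exact absurd h hx0
  have hR0 : R = 0 := by rw [← hxR, hxR0]
  -- each term of R is zero
  have hterm : ∀ i, β i • r i = 0 := by
    intro i
    have h1 : β i • r i ∈ wedge A := hdiff (smul_mem_wedge _ (hβ i) (hr i))
    have h2 : β i • r i ∈ -(wedge A) := by
      rw [Set.mem_neg]
      have hsum : ∑ j : Fin n, β j • r j = 0 := hRdef ▸ hR0
      have : -(β i • r i) = ∑ j ∈ Finset.univ.erase i, β j • r j := by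
        rw [eq_comm, Finset.sum_erase_eq_sub (Finset.mem_univ i), hsum, zero_sub]
      rw [this]
      exact sum_mem_wedge _ _ _ fun j _ => hdiff (smul_mem_wedge _ (hβ j) (hr j))
    have := hcone ▸ Set.mem_inter h1 h2
    simpa using this
  have hex : ∃ i, β i * t i ≠ 0 := by
    by_contra h
    push_neg at h
    have : c = 0 := by rw [hc]; exact Finset.sum_eq_zero fun i _ => h i
    rw [hc1] at this; norm_num at this
  obtain ⟨i, hi⟩ := hex
  have hβi : β i ≠ 0 := fun h => hi (by rw [h, zero_mul])
  have hti : t i ≠ 0 := fun h => hi (by rw [h, mul_zero])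
  have hri : r i = 0 := by
    rcases smul_eq_zero.mp (hterm i) with h | h
    · exact absurd h hβi
    · exact h
  refine ⟨t i, lt_of_le_of_ne (ht i) (Ne.symm hti), ?_⟩
  have : y i = t i • x := by rw [hyeq i, hri, add_zero]
  rw [← this]
  exact hyB i

end AuxWedge

/-- if a cone is generated by two minimal sets `A` and `B`, then `A` and
`B` agree up to positive scalars. -/
theorem stmt19 {V : Type*} [AddCommGroup V] [Module ℝ V] (A B : Set V)
    (hAB : wedge A = wedge B)
    (hcone : wedge A ∩ -(wedge A) = {0})
    (hminA : ∀ x ∈ A, wedge (A \ {x}) ≠ wedge A)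
    (hminB : ∀ y ∈ B, wedge (B \ {y}) ≠ wedge B) :
    (∀ x ∈ A, ∃ α : ℝ, 0 < α ∧ α • x ∈ B) ∧ (∀ y ∈ B, ∃ β : ℝ, 0 < β ∧ β • y ∈ A) := by
  exact ⟨key_half A B hAB hcone hminA, key_half B A hAB.symm (hAB ▸ hcone) hminB⟩
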